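/- The double series Σ_{d ≥ 1, t ≥ 1, gcd(d,t) = 1} μ(d) μ(t) / (d² t²) converges and equals the infinite product Π_p (1 − 2/p²) over all primes p. -/

import Mathlib

open ArithmeticFunction

private lemma card_divAntidiag (n : ℕ) :
    (Nat.divisorsAntidiagonal n).card = (Nat.divisors n).card := by
  rw [← Nat.image_fst_divisorsAntidiagonal, Finset.card_image_of_injOn]
  intro x hx y hy hxy
  rw [Finset.mem_coe, Nat.mem_divisorsAntidiagonal] at hx hy
  have hx1 : x.1 ≠ 0 := by rintro h; exact hx.2 (by rw [← hx.1, h, zero_mul])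
  have : x.2 = y.2 := by
    have := hx.1.trans hy.1.symm
    rw [hxy] at this
    exact Nat.eq_of_mul_eq_mul_left (Nat.pos_of_ne_zero (hxy ▸ hx1)) this
  exact Prod.ext hxy this

/-- Generic fiber computation. -/
private lemma fiber_tsum (w : ℕ → ℝ)
    (hmul : ∀ d t : ℕ, Nat.Coprime d t → w (d * t) = w d * w t)
    (h0 : ∀ n : ℕ, ¬ Squarefree n → w n = 0) (n : ℕ) :
    (∑' x : (fun p : ℕ × ℕ => p.1 * p.2) ⁻¹' {n},
      if 1 ≤ (x : ℕ × ℕ).1 ∧ 1 ≤ (x : ℕ × ℕ).2 ∧ Nat.Coprime (x : ℕ × ℕ).1 (x : ℕ × ℕ).2 then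
        w (x : ℕ × ℕ).1 * w (x : ℕ × ℕ).2 /
          (((x : ℕ × ℕ).1 : ℝ) ^ 2 * ((x : ℕ × ℕ).2 : ℝ) ^ 2)
      else 0)
    = w n * ((Nat.divisors n).card : ℝ) / (n : ℝ) ^ 2 := by
  rcases eq_or_ne n 0 with rfl | hn
  · have : ∀ x : (fun p : ℕ × ℕ => p.1 * p.2) ⁻¹' {(0 : ℕ)},
        (if 1 ≤ (x : ℕ × ℕ).1 ∧ 1 ≤ (x : ℕ × ℕ).2 ∧ Nat.Coprime (x : ℕ × ℕ).1 (x : ℕ × ℕ).2 then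
          w (x : ℕ × ℕ).1 * w (x : ℕ × ℕ).2 /
            (((x : ℕ × ℕ).1 : ℝ) ^ 2 * ((x : ℕ × ℕ).2 : ℝ) ^ 2)
        else 0) = 0 := by
      rintro ⟨⟨d, t⟩, hx⟩
      simp only [Set.mem_preimage, Set.mem_singleton_iff] at hx
      rcases Nat.mul_eq_zero.mp hx with h | h <;>
        · rw [if_neg]
          show ¬(1 ≤ d ∧ 1 ≤ t ∧ Nat.Coprime d t)
          rintro ⟨h1, h2, -⟩; omega
    rw [tsum_congr this]
    simp
  · rw [show (fun p : ℕ × ℕ => p.1 * p.2) ⁻¹' {n} = Nat.divisorsAntidiagonal n by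
        ext x; simp [Nat.mem_divisorsAntidiagonal, hn],
      Finset.tsum_subtype' (Nat.divisorsAntidiagonal n) (fun x : ℕ × ℕ =>
        if 1 ≤ x.1 ∧ 1 ≤ x.2 ∧ Nat.Coprime x.1 x.2 then
          w x.1 * w x.2 / ((x.1 : ℝ) ^ 2 * (x.2 : ℝ) ^ 2) else 0)]
    have hterm : ∀ x ∈ Nat.divisorsAntidiagonal n,
        (if 1 ≤ x.1 ∧ 1 ≤ x.2 ∧ Nat.Coprime x.1 x.2 then
          w x.1 * w x.2 / ((x.1 : ℝ) ^ 2 * (x.2 : ℝ) ^ 2) else 0)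
        = (if Nat.Coprime x.1 x.2 then w n / (n : ℝ) ^ 2 else 0) := by
      intro x hx
      rw [Nat.mem_divisorsAntidiagonal] at hx
      have h1 : x.1 ≠ 0 := by rintro h; exact hx.2 (by rw [← hx.1, h, zero_mul])
      have h2 : x.2 ≠ 0 := by rintro h; exact hx.2 (by rw [← hx.1, h, mul_zero])
      by_cases hc : Nat.Coprime x.1 x.2
      · rw [if_pos ⟨Nat.one_le_iff_ne_zero.mpr h1, Nat.one_le_iff_ne_zero.mpr h2, hc⟩, if_pos hc,
          ← hmul _ _ hc, hx.1]
        congr 1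
        rw [← hx.1]
        push_cast
        ring
      · rw [if_neg (by tauto), if_neg hc]
    rw [Finset.sum_congr rfl hterm]
    by_cases hsq : Squarefree n
    · have hco : ∀ x ∈ Nat.divisorsAntidiagonal n, Nat.Coprime x.1 x.2 := by
        intro x hx
        rw [Nat.mem_divisorsAntidiagonal] at hx
        exact Nat.coprime_of_squarefree_mul (hx.1 ▸ hsq)
      rw [Finset.sum_congr rfl fun x hx => if_pos (hco x hx), Finset.sum_const,
        card_divAntidiag, nsmul_eq_mul]
      ring
    · rw [h0 n hsq]
      simp

set_option maxHeartbeats 1600000 in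
/-- The double series `∑_{d,t ≥ 1, (d,t)=1} μ(d)μ(t)/(d²t²)` converges and equals
`∏_p (1 - 2/p²)`. -/
theorem stmt_5 :
    Summable (fun dt : ℕ × ℕ =>
      if 1 ≤ dt.1 ∧ 1 ≤ dt.2 ∧ Nat.Coprime dt.1 dt.2 then
        ((moebius dt.1 * moebius dt.2 : ℤ) : ℝ) / ((dt.1 : ℝ) ^ 2 * (dt.2 : ℝ) ^ 2)
      else 0) ∧
    (∑' dt : ℕ × ℕ,
      if 1 ≤ dt.1 ∧ 1 ≤ dt.2 ∧ Nat.Coprime dt.1 dt.2 then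
        ((moebius dt.1 * moebius dt.2 : ℤ) : ℝ) / ((dt.1 : ℝ) ^ 2 * (dt.2 : ℝ) ^ 2)
      else 0) = ∏' p : Nat.Primes, (1 - 2 / ((p : ℕ) : ℝ) ^ 2) := by
  -- abbreviations
  set w₁ : ℕ → ℝ := fun n => ((moebius n : ℤ) : ℝ) with hw₁def
  set w₂ : ℕ → ℝ := fun n => |w₁ n| with hw₂def
  have hw₁mul : ∀ d t : ℕ, Nat.Coprime d t → w₁ (d * t) = w₁ d * w₁ t := by
    intro d t h
    simp only [hw₁def, isMultiplicative_moebius.map_mul_of_coprime h]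
    push_cast
    ring
  have hw₁0 : ∀ n : ℕ, ¬ Squarefree n → w₁ n = 0 := by
    intro n h
    simp [hw₁def, moebius_eq_zero_of_not_squarefree h]
  have hw₂mul : ∀ d t : ℕ, Nat.Coprime d t → w₂ (d * t) = w₂ d * w₂ t := by
    intro d t h
    simp only [hw₂def, hw₁mul d t h, abs_mul]
  have hw₂0 : ∀ n : ℕ, ¬ Squarefree n → w₂ n = 0 := by
    intro n h
    simp [hw₂def, hw₁0 n h]
  have hw₁le : ∀ n : ℕ, |w₁ n| ≤ 1 := by
    intro n
    rw [hw₁def, ← Int.cast_abs]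
    exact_mod_cast abs_moebius_le_one (n := n)
  set F : ℕ × ℕ → ℝ := fun x =>
    if 1 ≤ x.1 ∧ 1 ≤ x.2 ∧ Nat.Coprime x.1 x.2 then
      w₁ x.1 * w₁ x.2 / ((x.1 : ℝ) ^ 2 * (x.2 : ℝ) ^ 2)
    else 0 with hFdef
  have hFeq : (fun dt : ℕ × ℕ =>
      if 1 ≤ dt.1 ∧ 1 ≤ dt.2 ∧ Nat.Coprime dt.1 dt.2 then
        ((moebius dt.1 * moebius dt.2 : ℤ) : ℝ) / ((dt.1 : ℝ) ^ 2 * (dt.2 : ℝ) ^ 2)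
      else 0) = F := by
    funext x
    simp only [hFdef, hw₁def, Int.cast_mul]
  -- summability
  have hs : Summable (fun n : ℕ => 1 / (n : ℝ) ^ 2) :=
    Real.summable_one_div_nat_pow.mpr one_lt_two
  have hG : Summable (fun x : ℕ × ℕ => (1 / (x.1 : ℝ) ^ 2) * (1 / (x.2 : ℝ) ^ 2)) :=
    hs.mul_of_nonneg hs (fun n => by positivity) (fun n => by positivity)
  have hFsum : Summable F := by
    apply Summable.of_norm_bounded hG
    intro x
    simp only [hFdef]
    by_cases hc : 1 ≤ x.1 ∧ 1 ≤ x.2 ∧ Nat.Coprime x.1 x.2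
    · rw [if_pos hc]
      have ha : (1 : ℝ) ≤ (x.1 : ℝ) := by exact_mod_cast hc.1
      have hb : (1 : ℝ) ≤ (x.2 : ℝ) := by exact_mod_cast hc.2.1
      have hden : (0 : ℝ) < (x.1 : ℝ) ^ 2 * (x.2 : ℝ) ^ 2 :=
        mul_pos (pow_pos (lt_of_lt_of_le zero_lt_one ha) 2)
          (pow_pos (lt_of_lt_of_le zero_lt_one hb) 2)
      rw [Real.norm_eq_abs, abs_div, abs_of_pos hden, one_div_mul_one_div, abs_mul]
      refine div_le_div₀ zero_le_one ?_ hden le_rfl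
      calc |w₁ x.1| * |w₁ x.2| ≤ 1 * 1 :=
            mul_le_mul (hw₁le x.1) (hw₁le x.2) (abs_nonneg _) zero_le_one
        _ = 1 := one_mul 1
    · rw [if_neg hc, norm_zero]
      positivity
  -- the fiberwise sum
  set f : ℕ → ℝ := fun n => w₁ n * ((Nat.divisors n).card : ℝ) / (n : ℝ) ^ 2 with hfdef
  have hfib : HasSum f (∑' x, F x) := by
    have h := hFsum.hasSum.tsum_fiberwise (fun p : ℕ × ℕ => p.1 * p.2)
    have h2 : (fun n : ℕ => ∑' (x : (fun p : ℕ × ℕ => p.1 * p.2) ⁻¹' {n}), F ↑x) = f :=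
      funext fun n => fiber_tsum w₁ hw₁mul hw₁0 n
    rwa [h2] at h
  -- norm summability of f
  have hfabs : ∀ n : ℕ, ‖f n‖ = w₂ n * ((Nat.divisors n).card : ℝ) / (n : ℝ) ^ 2 := by
    intro n
    rw [hfdef, hw₂def, Real.norm_eq_abs, abs_div, abs_mul,
      abs_of_nonneg (by positivity : (0:ℝ) ≤ ((Nat.divisors n).card : ℝ)),
      abs_of_nonneg (by positivity : (0:ℝ) ≤ ((n : ℝ)) ^ 2)]
  have hFabs_eq : (fun x : ℕ × ℕ => |F x|) = fun x : ℕ × ℕ =>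
      if 1 ≤ x.1 ∧ 1 ≤ x.2 ∧ Nat.Coprime x.1 x.2 then
        w₂ x.1 * w₂ x.2 / ((x.1 : ℝ) ^ 2 * (x.2 : ℝ) ^ 2)
      else 0 := by
    funext x
    simp only [hFdef, hw₂def]
    by_cases hc : 1 ≤ x.1 ∧ 1 ≤ x.2 ∧ Nat.Coprime x.1 x.2
    · rw [if_pos hc, if_pos hc, abs_div, abs_mul,
        abs_of_nonneg (by positivity : (0:ℝ) ≤ (x.1 : ℝ) ^ 2 * (x.2 : ℝ) ^ 2)]
    · rw [if_neg hc, if_neg hc, abs_zero]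
  have hfnorm : Summable (fun n : ℕ => ‖f n‖) := by
    have habs : Summable (fun x : ℕ × ℕ => |F x|) := hFsum.abs
    have h := habs.hasSum.tsum_fiberwise (fun p : ℕ × ℕ => p.1 * p.2)
    have h2 : (fun n : ℕ => ∑' (x : (fun p : ℕ × ℕ => p.1 * p.2) ⁻¹' {n}), |F ↑x|) =
        fun n : ℕ => w₂ n * ((Nat.divisors n).card : ℝ) / (n : ℝ) ^ 2 := by
      funext n
      rw [← fiber_tsum w₂ hw₂mul hw₂0 n]
      exact tsum_congr fun x => congrFun hFabs_eq ↑x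
    rw [h2] at h
    exact (summable_congr (fun n => (hfabs n))).mpr h.summable
  -- Euler product hypotheses
  have hf1 : f 1 = 1 := by
    simp [hfdef, hw₁def, Nat.divisors_one]
  have hf0 : f 0 = 0 := by
    simp [hfdef, hw₁def]
  have hmulf : ∀ {m n : ℕ}, Nat.Coprime m n → f (m * n) = f m * f n := by
    intro m n h
    simp only [hfdef]
    rw [hw₁mul m n h, Nat.Coprime.card_divisors_mul h]
    push_cast
    ring
  have heuler := EulerProduct.eulerProduct_tprod hf1 hmulf hfnorm hf0
  -- the per-prime sums
  have hp_sum : ∀ p : Nat.Primes, (∑' e : ℕ, f ((p : ℕ) ^ e)) = 1 - 2 / ((p : ℕ) : ℝ) ^ 2 := by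
    intro p
    have hp : (p : ℕ).Prime := p.2
    rw [tsum_eq_sum (s := ({0, 1} : Finset ℕ)) ?_]
    · rw [Finset.sum_pair (by norm_num : (0 : ℕ) ≠ 1)]
      rw [pow_zero, hf1, pow_one]
      have hcard : (Nat.divisors (p : ℕ)).card = 2 := by
        rw [hp.divisors, Finset.card_insert_of_notMem (by
          simp only [Finset.mem_singleton]
          exact hp.one_lt.ne), Finset.card_singleton]
      have hμ : w₁ (p : ℕ) = -1 := by
        simp [hw₁def, moebius_apply_prime hp]
      simp only [hfdef, hμ, hcard]
      push_cast
      ring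
    · intro e he
      simp only [Finset.mem_insert, Finset.mem_singleton] at he
      push_neg at he
      have h2 : 2 ≤ e := by omega
      have hnsq : ¬ Squarefree ((p : ℕ) ^ e) := by
        intro hsq
        have hdvd : (p : ℕ) * (p : ℕ) ∣ (p : ℕ) ^ e := by
          rw [← pow_two]
          exact pow_dvd_pow _ h2
        exact hp.one_lt.ne' (Nat.isUnit_iff.mp (hsq (p : ℕ) hdvd))
      simp only [hfdef, hw₁0 _ hnsq, zero_mul, zero_div]
  refine ⟨?_, ?_⟩
  · rw [hFeq]
    exact hFsum
  · rw [hFeq, hfib.tsum_eq.symm.trans heuler.symm]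
    exact tprod_congr hp_sum
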